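/- Let L be a finite distributive lattice, μ : L → ℝ≥0 a log-supermodular function (i.e., μ(x)μ(y) ≤ μ(x∨y)μ(x∧y) for all x, y), and f, g : L → ℝ≥0 both monotone increasing (or both decreasing). Then (∑_x f(x)μ(x))(∑_x g(x)μ(x)) ≤ (∑_x μ(x))(∑_x f(x)g(x)μ(x)). -/

import Mathlib

/-- The FKG inequality on a finite distributive lattice. -/
theorem fkg_inequality (L : Type*) [DistribLattice L] [Fintype L]
    (μ f g : L → ℝ)
    (hμ : ∀ x, 0 ≤ μ x) (hf : ∀ x, 0 ≤ f x) (hg : ∀ x, 0 ≤ g x)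
    (hlsm : ∀ x y : L, μ x * μ y ≤ μ (x ⊔ y) * μ (x ⊓ y))
    (hmono : (Monotone f ∧ Monotone g) ∨ (Antitone f ∧ Antitone g)) :
    (∑ x : L, f x * μ x) * (∑ x : L, g x * μ x) ≤
      (∑ x : L, μ x) * (∑ x : L, f x * g x * μ x) := by
  rcases hmono with ⟨hfm, hgm⟩ | ⟨hfa, hga⟩
  · have := fkg f g μ hμ hf hg hfm hgm
      (fun a b => by rw [mul_comm (μ (a ⊓ b))]; exact hlsm a b)
    simpa [mul_comm, mul_assoc, mul_left_comm] using this
  · have := fkg (α := Lᵒᵈ) (fun x => f (OrderDual.ofDual x)) (fun x => g (OrderDual.ofDual x))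
      (fun x => μ (OrderDual.ofDual x)) (fun x => hμ _) (fun x => hf _) (fun x => hg _)
      (fun a b hab => hfa hab) (fun a b hab => hga hab)
      (fun a b => hlsm (OrderDual.ofDual a) (OrderDual.ofDual b))
    have e : ∀ h : L → ℝ, ∑ x : Lᵒᵈ, h (OrderDual.ofDual x) = ∑ x : L, h x := fun h =>
      Fintype.sum_equiv OrderDual.ofDual _ _ fun _ => rfl
    simp only [e] at this
    have e1 : ∑ a : Lᵒᵈ, μ (OrderDual.ofDual a) * f (OrderDual.ofDual a) = ∑ x : L, μ x * f x :=
      e (fun x => μ x * f x)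
    have e2 : ∑ a : Lᵒᵈ, μ (OrderDual.ofDual a) * g (OrderDual.ofDual a) = ∑ x : L, μ x * g x :=
      e (fun x => μ x * g x)
    have e3 : ∑ a : Lᵒᵈ, μ (OrderDual.ofDual a) * (f (OrderDual.ofDual a) * g (OrderDual.ofDual a))
        = ∑ x : L, μ x * (f x * g x) := e (fun x => μ x * (f x * g x))
    simpa [mul_comm, mul_assoc, mul_left_comm, e1, e2, e3] using this
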